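/- arXiv:1912.03710 — 2 statements merged into one kernel-verified Lean document; each statement's English description precedes it below -/
import Mathlib

section
/- Let R be a Noetherian ring of characteristic p, I₁,…,I_t ideals, J an ideal with I₁,…,I_t ⊆ √J, and c = c^J(I₁ + ⋯ + I_t) the F-threshold of the sum. Then Vol_F^J(I₁,…,I_t) ≤ c^t / t!. -/
open Ideal Filter MeasureTheory

/-- The `q`-th Frobenius power of an ideal: the ideal generated by `q`-th powers of its
elements (used with `q = p ^ e`). -/
def Ideal.frobPow {R : Type*} [CommRing R] (J : Ideal R) (q : ℕ) : Ideal R :=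
  Ideal.span ((fun a => a ^ q) '' (J : Set R))

/-- The set `V` of exponent vectors `a ∈ ℕ^t` with `I₁^{a₁} ⋯ I_t^{a_t} ⊄ J'`. -/
def Vnu {R : Type*} [CommRing R] {t : ℕ} (I : Fin t → Ideal R) (J' : Ideal R) :
    Set (Fin t → ℕ) :=
  {a | ¬ (∏ i, I i ^ a i) ≤ J'}

/-- `ν_I^{J'} = max {n : I^n ⊄ J'}`. -/
noncomputable def nuF {R : Type*} [CommRing R] (I J' : Ideal R) : ℕ :=
  sSup {n : ℕ | ¬ I ^ n ≤ J'}

lemma frob_aux {R : Type*} [CommRing R] (J : Ideal R) (hJ : J.FG) (q : ℕ) (hq : 1 ≤ q) :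
    ∃ N : ℕ, J ^ N ≤ J.frobPow q := by
  classical
  obtain ⟨s, rfl⟩ := hJ
  refine ⟨s.card * (q - 1) + 1, ?_⟩
  rw [show (Ideal.span (s : Set R) : Ideal R) = Submodule.span R (s : Set R) from rfl,
    Submodule.span_pow, Submodule.span_le]
  intro x hx
  rw [Set.mem_pow] at hx
  obtain ⟨f, hf⟩ := hx
  rw [List.prod_ofFn] at hf
  obtain ⟨y, hy, hcard⟩ := Finset.exists_lt_card_fiber_of_mul_lt_card_of_maps_to
    (s := (Finset.univ : Finset (Fin (s.card * (q - 1) + 1)))) (t := s)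
    (f := fun i => ((f i : R))) (n := q - 1) (fun i _ => (f i).2)
    (by simp [Finset.card_univ])
  have hq' : q ≤ (Finset.univ.filter fun i => ((f i : R)) = y).card := by omega
  have hsplit : x = (∏ i ∈ Finset.univ.filter fun i => ((f i : R)) = y, (f i : R)) *
      ∏ i ∈ Finset.univ.filter fun i => ¬ ((f i : R)) = y, (f i : R) := by
    rw [Finset.prod_filter_mul_prod_filter_not, hf]
  have hconst : (∏ i ∈ Finset.univ.filter fun i => ((f i : R)) = y, (f i : R)) =
      y ^ (Finset.univ.filter fun i => ((f i : R)) = y).card := by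
    rw [Finset.prod_congr rfl (fun i hi => (Finset.mem_filter.mp hi).2), Finset.prod_const]
  have hyq : y ^ q ∈ (Ideal.span (s : Set R)).frobPow q :=
    Ideal.subset_span (Set.mem_image_of_mem _ (Ideal.subset_span hy))
  rw [hsplit, hconst, ← Nat.sub_add_cancel hq', pow_add]
  exact Ideal.mul_mem_right _ _ (Ideal.mul_mem_left _ _ hyq)

lemma prod_ideal_mono {R : Type*} [CommRing R] {ι : Type*} (s : Finset ι)
    (f g : ι → Ideal R) (h : ∀ i ∈ s, f i ≤ g i) : ∏ i ∈ s, f i ≤ ∏ i ∈ s, g i := by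
  classical
  induction s using Finset.induction with
  | empty => simp
  | insert _ _ hx ih =>
    rw [Finset.prod_insert hx, Finset.prod_insert hx]
    exact Ideal.mul_mono (h _ (Finset.mem_insert_self _ _))
      (ih fun i hi => h i (Finset.mem_insert_of_mem hi))

lemma nsmul_ideal_le {R : Type*} [CommRing R] (M : Ideal R) : ∀ n : ℕ, n • M ≤ M
  | 0 => by simp
  | n + 1 => by
    rw [succ_nsmul, Submodule.add_eq_sup]
    exact sup_le (nsmul_ideal_le M n) le_rfl

lemma sum_le_nuF {R : Type*} [CommRing R] [IsNoetherianRing R] {t : ℕ}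
    (I : Fin t → Ideal R) (J : Ideal R) (hrad : ∀ i, I i ≤ J.radical)
    (q : ℕ) (hq : 1 ≤ q) {a : Fin t → ℕ} (ha : a ∈ Vnu I (J.frobPow q)) :
    ∑ i, a i ≤ nuF (∑ i, I i) (J.frobPow q) := by
  set K : Ideal R := ∑ i, I i with hKdef
  have hle : ∀ i, I i ≤ K := fun i => Finset.single_le_sum (f := fun i => I i)
    (fun _ _ => bot_le) (Finset.mem_univ i)
  have hprod : (∏ i, I i ^ a i) ≤ K ^ (∑ i, a i) := by
    rw [← Finset.prod_pow_eq_pow_sum]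
    exact prod_ideal_mono _ _ _ fun i _ => Ideal.pow_right_mono (hle i) _
  have hmem : (∑ i, a i) ∈ {n : ℕ | ¬ K ^ n ≤ J.frobPow q} :=
    fun h => ha (hprod.trans h)
  have hKrad : K ≤ J.radical := by
    rw [hKdef]
    exact (Finset.sum_le_sum fun i _ => hrad i).trans (by
      rw [Finset.sum_const]; exact nsmul_ideal_le _ _)
  obtain ⟨k, hk⟩ := Ideal.exists_pow_le_of_le_radical_of_fg hKrad (IsNoetherian.noetherian K)
  obtain ⟨N, hN⟩ := frob_aux J (IsNoetherian.noetherian J) q hq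
  have hbdd : BddAbove {n : ℕ | ¬ K ^ n ≤ J.frobPow q} := by
    refine ⟨k * N, fun n hn => ?_⟩
    by_contra hlt
    exact hn (((Ideal.pow_le_pow_right (le_of_not_ge hlt)).trans
      (by rw [pow_mul]; exact (Ideal.pow_right_mono hk N).trans hN)))
  exact le_csSup hbdd hmem

noncomputable def simplexFinset (t ν : ℕ) : Finset (Fin t → ℕ) :=
  (Fintype.piFinset fun _ => Finset.range (ν + 1)).filter fun a => ∑ i, a i ≤ ν

lemma mem_simplexFinset {t ν : ℕ} {a : Fin t → ℕ} (h : ∑ i, a i ≤ ν) :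
    a ∈ simplexFinset t ν := by
  refine Finset.mem_filter.mpr ⟨Fintype.mem_piFinset.mpr fun i => Finset.mem_range.mpr ?_, h⟩
  exact Nat.lt_succ_of_le ((Finset.single_le_sum (fun _ _ => Nat.zero_le _)
    (Finset.mem_univ i)).trans h)

def phiF {t ν : ℕ} (a : Fin t → ℕ) (ha : ∑ i, a i ≤ ν) (i : Fin t) : Fin (ν + t) :=
  ⟨i + ∑ j ∈ Finset.Iic i, a j, by
    have h1 : ∑ j ∈ Finset.Iic i, a j ≤ ν :=
      (Finset.sum_le_sum_of_subset (Finset.subset_univ _)).trans ha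
    have := i.isLt
    omega⟩

lemma phiF_strictMono {t ν : ℕ} (a : Fin t → ℕ) (ha : ∑ i, a i ≤ ν) :
    StrictMono (phiF a ha) := by
  intro i i' h
  simp only [phiF, Fin.mk_lt_mk, Fin.lt_def]
  have : ∑ j ∈ Finset.Iic i, a j ≤ ∑ j ∈ Finset.Iic i', a j :=
    Finset.sum_le_sum_of_subset (Finset.Iic_subset_Iic.mpr h.le)
  have := (Fin.lt_def).mp h
  omega

lemma phiF_inj {t ν : ℕ} (a a' : Fin t → ℕ) (ha : ∑ i, a i ≤ ν) (ha' : ∑ i, a' i ≤ ν)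
    (h : phiF a ha = phiF a' ha') : a = a' := by
  have H : ∀ n : ℕ, ∀ i : Fin t, (i : ℕ) = n → a i = a' i := by
    intro n
    induction n using Nat.strong_induction_on with
    | _ n ih =>
      intro i hi
      have hcf := congrFun h i
      simp only [phiF, Fin.mk.injEq] at hcf
      have hIic : Finset.Iic i = insert i (Finset.Iio i) := by
        ext j; simp [Finset.mem_Iio, Finset.mem_Iic, le_iff_lt_or_eq, or_comm]
      rw [hIic, Finset.sum_insert (by simp), Finset.sum_insert (by simp)] at hcf
      have hprev : ∑ j ∈ Finset.Iio i, a j = ∑ j ∈ Finset.Iio i, a' j :=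
        Finset.sum_congr rfl fun j hj =>
          ih (j : ℕ) (by have := Finset.mem_Iio.mp hj; omega) j rfl
      omega
  funext i
  exact H (i : ℕ) i rfl

lemma simplex_card_bound (t ν : ℕ) :
    t.factorial * (simplexFinset t ν).card ≤ (ν + t) ^ t := by
  classical
  have key : ((simplexFinset t ν) ×ˢ (Finset.univ : Finset (Equiv.Perm (Fin t)))).card ≤
      (Finset.univ : Finset (Fin t ↪ Fin (ν + t))).card := by
    refine Finset.card_le_card_of_injOn (fun x =>
      if hx : ∑ i, x.1 i ≤ ν then
        ⟨phiF x.1 hx ∘ x.2, ((phiF_strictMono x.1 hx).injective).comp x.2.injective⟩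
      else Fin.castLEEmb (Nat.le_add_left t ν)) (fun _ _ => Finset.mem_univ _) ?_
    rintro ⟨a, σ⟩ hmem ⟨a', σ'⟩ hmem' heq
    have ha : ∑ i, a i ≤ ν := (Finset.mem_filter.mp (Finset.mem_product.mp hmem).1).2
    have ha' : ∑ i, a' i ≤ ν := (Finset.mem_filter.mp (Finset.mem_product.mp hmem').1).2
    simp only [dif_pos ha, dif_pos ha'] at heq
    have hfun : phiF a ha ∘ σ = phiF a' ha' ∘ σ' := congrArg (fun f => f.toFun) heq
    have hrange : Set.range (phiF a ha) = Set.range (phiF a' ha') := by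
      rw [← σ.surjective.range_comp (phiF a ha), ← σ'.surjective.range_comp (phiF a' ha'), hfun]
    haveI : WellFoundedLT (Fin t) := inferInstance
    have haa : phiF a ha = phiF a' ha' :=
      Set.range_injOn_strictMono (phiF_strictMono a ha) (phiF_strictMono a' ha') hrange
    have haa' : a = a' := phiF_inj a a' ha ha' haa
    subst haa'
    have : σ = σ' := by
      ext i
      have h2 : σ i = σ' i := (phiF_strictMono a ha).injective (by
        have := congrFun hfun i
        simpa [haa] using this)
      exact congrArg Fin.val h2
    simp [this]
  rw [Finset.card_product, Finset.card_univ, Finset.card_univ, Fintype.card_perm,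
    Fintype.card_embedding_eq, Fintype.card_fin, Fintype.card_fin] at key
  calc t.factorial * (simplexFinset t ν).card
      = (simplexFinset t ν).card * t.factorial := mul_comm _ _
    _ ≤ (ν + t).descFactorial t := key
    _ ≤ (ν + t) ^ t := Nat.descFactorial_le_pow _ _

/-- With `c = c^J(I₁ + ⋯ + I_t)`, one has `Vol_F^J(I₁,…,I_t) ≤ c^t / t!`. -/
theorem stmt8 {R : Type*} [CommRing R] [IsNoetherianRing R] (p : ℕ) [Fact p.Prime]
    [CharP R p] {t : ℕ} (I : Fin t → Ideal R) (J : Ideal R)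
    (hrad : ∀ i, I i ≤ J.radical) (c L : ℝ)
    (hc : Tendsto (fun e : ℕ => (nuF (∑ i, I i) (J.frobPow (p ^ e)) : ℝ) / (p : ℝ) ^ e)
      atTop (nhds c))
    (hL : Tendsto (fun e : ℕ => ((Vnu I (J.frobPow (p ^ e))).ncard : ℝ) / (p : ℝ) ^ (e * t))
      atTop (nhds L)) :
    L ≤ c ^ t / (Nat.factorial t : ℝ) := by
  have hp2 : 2 ≤ p := (Fact.out (p := p.Prime)).two_le
  have hp0 : (0:ℝ) < (p:ℝ) := by positivity
  have hinv : Tendsto (fun e : ℕ => (t : ℝ) * ((p:ℝ)⁻¹) ^ e) atTop (nhds ((t:ℝ) * 0)) := by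
    refine Tendsto.const_mul _ (tendsto_pow_atTop_nhds_zero_of_lt_one ?_ ?_)
    · positivity
    · rw [inv_lt_one_iff₀]; right; exact_mod_cast by omega
  have hg : Tendsto (fun e : ℕ =>
      ((nuF (∑ i, I i) (J.frobPow (p ^ e)) : ℝ) / (p : ℝ) ^ e + (t : ℝ) * ((p:ℝ)⁻¹) ^ e) ^ t
        / (Nat.factorial t : ℝ)) atTop (nhds ((c + (t:ℝ) * 0) ^ t / (Nat.factorial t : ℝ))) :=
    ((hc.add hinv).pow t).div_const _
  rw [mul_zero, add_zero] at hg
  refine le_of_tendsto_of_tendsto' hL hg ?_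
  intro e
  set q := p ^ e with hqdef
  have hq1 : 1 ≤ q := Nat.one_le_pow _ _ (by omega)
  set ν := nuF (∑ i, I i) (J.frobPow q) with hν
  have hcard : (Vnu I (J.frobPow q)).ncard ≤ (simplexFinset t ν).card := by
    rw [← Set.ncard_coe_finset]
    exact Set.ncard_le_ncard
      (fun a ha => mem_simplexFinset (sum_le_nuF I J hrad q hq1 ha))
      (Finset.finite_toSet _)
  have hnat : t.factorial * (Vnu I (J.frobPow q)).ncard ≤ (ν + t) ^ t :=
    le_trans (Nat.mul_le_mul_left _ hcard) (simplex_card_bound t ν)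
  have hnatR : (t.factorial : ℝ) * ((Vnu I (J.frobPow q)).ncard : ℝ) ≤ ((ν : ℝ) + t) ^ t := by
    exact_mod_cast hnat
  have hpe : (0:ℝ) < (p:ℝ) ^ e := by positivity
  have hfact : (0:ℝ) < (t.factorial : ℝ) := by exact_mod_cast t.factorial_pos
  have hsum : (ν : ℝ) / (p:ℝ) ^ e + (t : ℝ) * ((p:ℝ)⁻¹) ^ e = ((ν : ℝ) + t) / (p:ℝ) ^ e := by
    rw [inv_pow]
    field_simp
  rw [hsum, div_pow, pow_mul, div_div]
  rw [div_le_div_iff₀ (by positivity) (by positivity)]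
  nlinarith [mul_le_mul_of_nonneg_right hnatR (pow_pos hpe t).le,
    mul_pos (pow_pos hpe t) hfact]
end

section
/- Let R be an F-pure Noetherian ring of characteristic p, I₁,…,I_t ideals, and J ⊆ R an ideal with I₁,…,I_t ⊆ √J. Then the set B^J(I₁,…,I_t) = ⋃_e ⋃_{a ∈ V(p^e)} [0,a₁/p^e] × ⋯ × [0,a_t/p^e] ⊆ ℝ^t is Lebesgue measurable and its measure equals the F-volume: Vol(B^J(I₁,…,I_t)) = Vol_F^J(I₁,…,I_t). -/
open Ideal Filter MeasureTheory

universe u v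

/-- A ring homomorphism `f : R → S` is pure if for every `R`-module `M`, the natural map
`M → M ⊗_R S` (with `S` viewed as an `R`-module via `f`) is injective. -/
def RingHom.IsPureHom {R : Type u} {S : Type v} [CommRing R] [CommRing S]
    (f : R →+* S) : Prop :=
  ∀ (M : Type (max u v)) [AddCommGroup M] [Module R M],
    letI : Module R S := Module.compHom S f
    Function.Injective (fun m : M => (TensorProduct.tmul R m (1 : S) : TensorProduct R M S))

/-- `R` is F-pure if the Frobenius endomorphism is a pure ring homomorphism. -/
def IsFPure (p : ℕ) (R : Type u) [CommRing R] [Fact p.Prime] [CharP R p] : Prop :=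
  RingHom.IsPureHom (frobenius R p)

/-- The region `B^{J'}(I; q) = ⋃_{a ∈ V} ∏ᵢ [0, aᵢ/q] ⊆ ℝ^t`. -/
def Breg {R : Type*} [CommRing R] {t : ℕ} (I : Fin t → Ideal R) (J' : Ideal R) (q : ℕ) :
    Set (Fin t → ℝ) :=
  ⋃ a ∈ Vnu I J', Set.univ.pi fun i => Set.Icc (0 : ℝ) ((a i : ℝ) / (q : ℝ))


/-! ### Auxiliary lemmas -/

section Purity

theorem tensor_calc {R : Type u} {S : Type v} [CommRing R] [CommRing S] (f : R →+* S)
    (K : Ideal R) (x : R) (hx : f x ∈ Ideal.span (⇑f '' (K : Set R))) :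
    letI : Module R S := Module.compHom S f
    (TensorProduct.tmul R (Ideal.Quotient.mk K x) (1 : S) :
        TensorProduct R (R ⧸ K) S)
      = TensorProduct.tmul R (0 : R ⧸ K) (1 : S) := by
  letI : Module R S := Module.compHom S f
  have hsmul : ∀ (r : R) (s : S), r • s = f r * s := fun r s => rfl
  have hq : ∀ r : R, r • (1 : R ⧸ K) = Ideal.Quotient.mk K r := by
    intro r
    rw [← map_one (Ideal.Quotient.mk K)]
    show r • Submodule.Quotient.mk (1 : R) = _
    rw [← Submodule.Quotient.mk_smul K r (1 : R), smul_eq_mul, mul_one]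
    rfl
  have key : ∀ y ∈ Ideal.span (⇑f '' (K : Set R)),
      (TensorProduct.tmul R (1 : R ⧸ K) y : TensorProduct R (R ⧸ K) S) = 0 := by
    intro y hy
    obtain ⟨n, c, g, rfl⟩ := Submodule.mem_span_set'.mp hy
    rw [TensorProduct.tmul_sum]
    refine Finset.sum_eq_zero fun i _ => ?_
    obtain ⟨k, hk, hfk⟩ := (g i).2
    have e1 : (c i) • ((g i : S)) = k • (c i : S) := by
      rw [hsmul, ← hfk, smul_eq_mul, mul_comm]
    rw [e1, ← TensorProduct.smul_tmul, hq k, Ideal.Quotient.eq_zero_iff_mem.mpr hk,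
      TensorProduct.zero_tmul]
  have e2 : (Ideal.Quotient.mk K x : R ⧸ K) ⊗ₜ[R] (1 : S)
      = (1 : R ⧸ K) ⊗ₜ[R] (f x) := by
    rw [← hq x, TensorProduct.smul_tmul, hsmul, mul_one]
  rw [e2, key _ hx, TensorProduct.zero_tmul]

theorem pure_mem {R : Type u} [CommRing R] (f : R →+* R) (hf : f.IsPureHom)
    (K : Ideal R) (x : R) (hx : f x ∈ Ideal.span (⇑f '' (K : Set R))) : x ∈ K := by
  have h := hf (R ⧸ K)
  exact Ideal.Quotient.eq_zero_iff_mem.mp (h (tensor_calc f K x hx))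

end Purity

section IdealLemmas

variable {R : Type u} [CommRing R]

theorem pow_mem_frobPow {J : Ideal R} {x : R} (hx : x ∈ J) (q : ℕ) :
    x ^ q ∈ J.frobPow q :=
  Ideal.subset_span ⟨x, hx, rfl⟩

theorem frobPow_mul_le (J : Ideal R) (q p' : ℕ) :
    J.frobPow (q * p') ≤ (J.frobPow q).frobPow p' := by
  rw [Ideal.frobPow, Ideal.span_le]
  rintro _ ⟨a, ha, rfl⟩
  show a ^ (q * p') ∈ (J.frobPow q).frobPow p'
  rw [pow_mul]
  exact pow_mem_frobPow (pow_mem_frobPow ha q) p'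

theorem span_pow_card_le (q : ℕ) (T : Finset R) :
    (Ideal.span (T : Set R)) ^ (T.card * q + 1) ≤ Ideal.span ((fun a => a ^ q) '' T) := by
  classical
  induction T using Finset.induction_on with
  | empty => simp
  | @insert a T ha ih =>
      rw [Finset.card_insert_of_notMem ha, Finset.coe_insert, Set.insert_eq,
        Ideal.span_union, add_mul, one_mul]
      have hexp : T.card * q + q + 1 = q + (T.card * q + 1) := by ring
      rw [hexp]
      refine le_trans (Ideal.sup_pow_add_le_pow_sup_pow) (sup_le ?_ ?_)
      · rw [Ideal.span_singleton_pow]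
        rw [Ideal.span_le, Set.singleton_subset_iff]
        exact Ideal.subset_span ⟨a, by simp, rfl⟩
      · refine le_trans ih (Ideal.span_mono ?_)
        intro y hy
        obtain ⟨b, hb, rfl⟩ := hy
        exact ⟨b, by simp [hb], rfl⟩

theorem pow_le_frobPow {J : Ideal R} {T : Finset R} (hT : Ideal.span (T : Set R) = J)
    (q : ℕ) : J ^ (T.card * q + 1) ≤ J.frobPow q := by
  rw [← hT]
  refine le_trans (span_pow_card_le q T) (Ideal.span_mono ?_)
  exact Set.image_mono Ideal.subset_span

variable {t : ℕ}

theorem prod_pow_antitone (I : Fin t → Ideal R) {a b : Fin t → ℕ} (h : ∀ i, a i ≤ b i) :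
    (∏ i, I i ^ b i) ≤ ∏ i, I i ^ a i := by
  classical
  induction (Finset.univ : Finset (Fin t)) using Finset.induction_on with
  | empty => simp
  | @insert j s hj ih =>
      rw [Finset.prod_insert hj, Finset.prod_insert hj]
      exact Ideal.mul_mono (Ideal.pow_le_pow_right (h j)) ih

theorem Vnu_dclosed {I : Fin t → Ideal R} {J' : Ideal R} {a b : Fin t → ℕ}
    (hb : b ∈ Vnu I J') (h : ∀ i, a i ≤ b i) : a ∈ Vnu I J' :=
  fun hle => hb (le_trans (prod_pow_antitone I h) hle)

theorem Vnu_bound {I : Fin t → Ideal R} {J' : Ideal R} {M : ℕ} {i : Fin t}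
    (hM : (I i) ^ M ≤ J') {a : Fin t → ℕ} (ha : a ∈ Vnu I J') : a i < M := by
  by_contra hlt
  push_neg at hlt
  refine ha (le_trans ?_ (le_trans (Ideal.pow_le_pow_right hlt) hM))
  exact le_trans Ideal.prod_le_inf (Finset.inf_le (Finset.mem_univ i))

theorem exists_bound [IsNoetherianRing R] (J : Ideal R) (I : Fin t → Ideal R)
    (hrad : ∀ i, I i ≤ J.radical) :
    ∃ C : ℕ, 0 < C ∧ ∀ q : ℕ, 1 ≤ q → ∀ a ∈ Vnu I (J.frobPow q), ∀ i, a i < C * q := by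
  obtain ⟨n, hn⟩ := J.exists_radical_pow_le_of_fg (IsNoetherian.noetherian _)
  obtain ⟨T, hT⟩ := IsNoetherian.noetherian J
  refine ⟨n * (T.card + 1) + 1, Nat.succ_pos _, fun q hq a ha i => ?_⟩
  have hIJ : (I i) ^ n ≤ J := le_trans (Ideal.pow_right_mono (hrad i) n) hn
  have hM : (I i) ^ (n * (T.card * q + 1)) ≤ J.frobPow q := by
    rw [pow_mul]
    exact le_trans (Ideal.pow_right_mono hIJ _) (pow_le_frobPow hT q)
  have := Vnu_bound hM ha
  have harith : n * (T.card * q + 1) ≤ (n * (T.card + 1) + 1) * q := by nlinarith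
  omega

theorem Vnu_step {p : ℕ} [Fact p.Prime] [CharP R p]
    (hFP : RingHom.IsPureHom (frobenius R p)) (J : Ideal R) (I : Fin t → Ideal R)
    {e : ℕ} {a : Fin t → ℕ} (ha : a ∈ Vnu I (J.frobPow (p ^ e))) :
    (fun i => p * a i) ∈ Vnu I (J.frobPow (p ^ (e + 1))) := by
  intro hle
  refine ha fun x hx => ?_
  apply pure_mem (frobenius R p) hFP (J.frobPow (p ^ e)) x
  have himg : ⇑(frobenius R p) '' ((J.frobPow (p ^ e) : Ideal R) : Set R)
      = (fun a => a ^ p) '' ((J.frobPow (p ^ e) : Ideal R) : Set R) := by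
    ext y; simp only [Set.mem_image, frobenius_def]
  rw [himg]
  show x ^ p ∈ (J.frobPow (p ^ e)).frobPow p
  have h1 : x ^ p ∈ (∏ i, I i ^ a i) ^ p := Ideal.pow_mem_pow hx p
  have h2 : (∏ i, I i ^ a i) ^ p = ∏ i, I i ^ (p * a i) := by
    rw [← Finset.prod_pow]
    exact Finset.prod_congr rfl fun i _ => by rw [← pow_mul, mul_comm]
  refine (frobPow_mul_le J (p ^ e) p) ?_
  rw [← pow_succ]
  exact hle (h2 ▸ h1)

end IdealLemmas

section Geometry

variable {t : ℕ}

noncomputable def cell (q : ℕ) (a : Fin t → ℕ) : Set (Fin t → ℝ) :=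
  Set.univ.pi fun i => Set.Ioc (((a i : ℝ) - 1) / q) ((a i : ℝ) / q)

theorem volume_cell {q : ℕ} (hq : 1 ≤ q) (a : Fin t → ℕ) :
    volume (cell q a) = (ENNReal.ofReal (1 / (q : ℝ))) ^ t := by
  have hq' : (0 : ℝ) < q := by exact_mod_cast hq
  rw [cell, volume_pi_pi]
  have : ∀ i : Fin t, volume (Set.Ioc (((a i : ℝ) - 1) / q) ((a i : ℝ) / q))
      = ENNReal.ofReal (1 / (q : ℝ)) := by
    intro i
    rw [Real.volume_Ioc]
    congr 1
    field_simp
    ring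
  simp [this]

theorem cell_disjoint {q : ℕ} (hq : 1 ≤ q) {a b : Fin t → ℕ} (hab : a ≠ b) :
    Disjoint (cell q a) (cell q b) := by
  have hq' : (0 : ℝ) < q := by exact_mod_cast hq
  have key : ∀ u v : ℕ, u < v → ∀ y : ℝ,
      y ∈ Set.Ioc (((u : ℝ) - 1) / q) ((u : ℝ) / q) →
      y ∈ Set.Ioc (((v : ℝ) - 1) / q) ((v : ℝ) / q) → False := by
    intro u v huv y hy1 hy2
    have hc : (u : ℝ) ≤ (v : ℝ) - 1 := by
      have : (u + 1 : ℕ) ≤ v := huv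
      have h2 := Nat.cast_le (α := ℝ).mpr this
      push_cast at h2; linarith
    have hle : (u : ℝ) / q ≤ ((v : ℝ) - 1) / q := (div_le_div_iff_of_pos_right hq').mpr hc
    have := hy1.2
    have := hy2.1
    linarith
  rw [Set.disjoint_left]
  intro x hxa hxb
  have : ∃ i, a i ≠ b i := by
    by_contra h; push_neg at h; exact hab (funext h)
  obtain ⟨i, hi⟩ := this
  have h1 := hxa i (Set.mem_univ i)
  have h2 := hxb i (Set.mem_univ i)
  rcases Nat.lt_or_ge (a i) (b i) with h | h
  · exact key _ _ h _ h1 h2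
  · exact key _ _ (lt_of_le_of_ne h (fun e => hi e.symm)) _ h2 h1

theorem volume_null_hyper :
    volume (⋃ i : Fin t, {x : Fin t → ℝ | x i = 0}) = 0 := by
  refine measure_iUnion_null fun i => ?_
  have : {x : Fin t → ℝ | x i = 0} = Set.univ.pi
      (fun j => if j = i then ({0} : Set ℝ) else Set.univ) := by
    ext x
    simp only [Set.mem_setOf_eq, Set.mem_pi, Set.mem_univ, forall_true_left]
    constructor
    · intro h j; by_cases hj : j = i <;> simp [hj, h]
    · intro h; have := h i; simpa using this
  rw [this, volume_pi_pi]
  refine Finset.prod_eq_zero (Finset.mem_univ i) ?_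
  simp

/-- Volume of the region at a fixed level. -/
theorem volume_B {q : ℕ} (hq : 1 ≤ q) (V : Set (Fin t → ℕ)) (hVfin : V.Finite)
    (hdc : ∀ a b : Fin t → ℕ, b ∈ V → (∀ i, a i ≤ b i) → a ∈ V) :
    volume (⋃ a ∈ V, Set.univ.pi fun i => Set.Icc (0 : ℝ) ((a i : ℝ) / (q : ℝ)))
      = ({a ∈ V | ∀ i, 1 ≤ a i}.ncard) * (ENNReal.ofReal (1 / (q : ℝ))) ^ t := by
  classical
  have hq' : (0 : ℝ) < q := by exact_mod_cast hq
  set Vp : Set (Fin t → ℕ) := {a ∈ V | ∀ i, 1 ≤ a i} with hVp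
  have hVpfin : Vp.Finite := hVfin.subset (fun a ha => ha.1)
  set F : Finset (Fin t → ℕ) := hVpfin.toFinset with hF
  set B := ⋃ a ∈ V, Set.univ.pi fun i => Set.Icc (0 : ℝ) ((a i : ℝ) / (q : ℝ)) with hB
  have hcell_sub : ∀ a ∈ Vp, cell q a ⊆ B := by
    intro a ha x hx
    refine Set.mem_iUnion₂.mpr ⟨a, ha.1, fun i _ => ?_⟩
    have h := hx i (Set.mem_univ i)
    have h1 : (0 : ℝ) ≤ ((a i : ℝ) - 1) / q := by
      apply div_nonneg _ hq'.le
      have : (1 : ℝ) ≤ (a i : ℝ) := by exact_mod_cast ha.2 i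
      linarith
    exact ⟨le_trans h1 h.1.le, h.2⟩
  have hB_sub : B ⊆ (⋃ a ∈ F, cell q a) ∪ ⋃ i : Fin t, {x : Fin t → ℝ | x i = 0} := by
    intro x hx
    by_cases hzero : ∃ i, x i = 0
    · exact Or.inr (Set.mem_iUnion.mpr ⟨hzero.choose, hzero.choose_spec⟩)
    · push_neg at hzero
      obtain ⟨a, haV, hxa⟩ := Set.mem_iUnion₂.mp hx
      left
      have hxnn : ∀ i, 0 ≤ x i := fun i => (hxa i (Set.mem_univ i)).1
      have hxpos : ∀ i, 0 < x i := fun i => lt_of_le_of_ne (hxnn i) (Ne.symm (hzero i))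
      set b : Fin t → ℕ := fun i => ⌈(q : ℝ) * x i⌉₊ with hb
      have hble : ∀ i, b i ≤ a i := by
        intro i
        rw [hb]
        refine Nat.ceil_le.mpr ?_
        have := (hxa i (Set.mem_univ i)).2
        rw [div_eq_mul_inv] at this
        calc (q : ℝ) * x i ≤ q * ((a i : ℝ) * (q : ℝ)⁻¹) := by
              exact mul_le_mul_of_nonneg_left this hq'.le
          _ = (a i : ℝ) := by field_simp
      have hbV : b ∈ V := hdc b a haV hble
      have hbpos : ∀ i, 1 ≤ b i := fun i =>
        Nat.one_le_ceil_iff.mpr (mul_pos hq' (hxpos i))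
      refine Set.mem_iUnion₂.mpr ⟨b, ?_, fun i _ => ?_⟩
      · rw [hF]; exact hVpfin.mem_toFinset.mpr ⟨hbV, hbpos⟩
      · constructor
        · show ((b i : ℝ) - 1) / q < x i
          rw [div_lt_iff₀ hq']
          have hlt : ((b i : ℝ)) < q * x i + 1 := by
            rw [hb]; exact_mod_cast Nat.ceil_lt_add_one (mul_pos hq' (hxpos i)).le
          linarith [hlt, mul_comm (q : ℝ) (x i)]
        · show x i ≤ (b i : ℝ) / q
          rw [le_div_iff₀ hq']
          calc x i * q = q * x i := mul_comm _ _
            _ ≤ (b i : ℝ) := Nat.le_ceil _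
  have hvolcells : volume (⋃ a ∈ F, cell q a)
      = (Vp.ncard) * (ENNReal.ofReal (1 / (q : ℝ))) ^ t := by
    rw [measure_biUnion_finset ?_ ?_]
    · rw [Finset.sum_congr rfl fun a _ => volume_cell hq a, Finset.sum_const,
        nsmul_eq_mul]
      congr 1
      rw [Set.ncard_eq_toFinset_card Vp hVpfin]
    · intro a ha b hb hab
      exact cell_disjoint hq hab
    · intro a _
      exact MeasurableSet.univ_pi fun i => measurableSet_Ioc
  refine le_antisymm ?_ ?_
  · calc volume B ≤ volume ((⋃ a ∈ F, cell q a) ∪ ⋃ i : Fin t, {x : Fin t → ℝ | x i = 0}) :=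
        measure_mono hB_sub
      _ ≤ volume (⋃ a ∈ F, cell q a) + volume (⋃ i : Fin t, {x : Fin t → ℝ | x i = 0}) :=
        measure_union_le _ _
      _ = (Vp.ncard) * (ENNReal.ofReal (1 / (q : ℝ))) ^ t := by
        rw [volume_null_hyper, add_zero, hvolcells]
  · rw [← hvolcells]
    refine measure_mono ?_
    refine Set.iUnion₂_subset fun a ha => ?_
    exact hcell_sub a (hVpfin.mem_toFinset.mp ha)

end Geometry

section Counting

theorem ncard_biUnion_le' {ι α : Type*} (F : Finset ι) (s : ι → Set α)
    (h : ∀ i, (s i).Finite) :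
    (⋃ i ∈ F, s i).ncard ≤ ∑ i ∈ F, (s i).ncard := by
  classical
  induction F using Finset.induction_on with
  | empty => simp
  | @insert a F ha ih =>
      rw [Finset.sum_insert ha]
      refine le_trans (le_of_eq (by rw [Finset.set_biUnion_insert])) ?_
      refine le_trans (Set.ncard_union_le _ _) ?_
      exact Nat.add_le_add_left ih _

theorem ncard_pi_fin {β : Type*} {n : ℕ} (g : Fin n → Set β) :
    (Set.univ.pi g).ncard = ∏ i, (g i).ncard := by
  rw [← Nat.card_coe_set_eq, Nat.card_congr (Equiv.Set.univPi g), Nat.card_pi]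
  exact Finset.prod_congr rfl fun i _ => Nat.card_coe_set_eq (g i)

theorem boundary_count {t M : ℕ} (V : Set (Fin t → ℕ)) (hbd : ∀ a ∈ V, ∀ i, a i < M) :
    (V \ {a ∈ V | ∀ i, 1 ≤ a i}).ncard ≤ t * M ^ (t - 1) := by
  classical
  set S : Fin t → Set (Fin t → ℕ) :=
    fun i => Set.univ.pi (fun j => if j = i then {0} else Set.Iio M) with hS
  have hSfin : ∀ i, (S i).Finite := by
    intro i
    apply Set.Finite.pi
    intro j
    by_cases hj : j = i <;> simp [hS, hj, Set.finite_Iio]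
  have hsub : (V \ {a ∈ V | ∀ i, 1 ≤ a i}) ⊆ ⋃ i ∈ (Finset.univ : Finset (Fin t)), S i := by
    rintro a ⟨haV, hna⟩
    simp only [Set.mem_setOf_eq, not_and, not_forall] at hna
    obtain ⟨i, hi⟩ := hna haV
    have hi0 : a i = 0 := by omega
    refine Set.mem_iUnion₂.mpr ⟨i, Finset.mem_univ i, fun j _ => ?_⟩
    by_cases hj : j = i
    · simp [hj, hi0]
    · simp only [if_neg hj, Set.mem_Iio]
      exact hbd a haV j
  have hScard : ∀ i, (S i).ncard = M ^ (t - 1) := by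
    intro i
    rw [hS, ncard_pi_fin]
    have h1 : ∀ j : Fin t, (if j = i then ({0} : Set ℕ) else Set.Iio M).ncard
        = if j = i then 1 else M := by
      intro j
      by_cases hj : j = i <;>
        simp [hj, Set.ncard_singleton, ← Nat.card_coe_set_eq, Nat.card_Iio]
    rw [Finset.prod_congr rfl fun j _ => h1 j]
    rw [← Finset.mul_prod_erase Finset.univ _ (Finset.mem_univ i), if_pos rfl, one_mul]
    rw [Finset.prod_congr rfl (fun j hj => if_neg (Finset.ne_of_mem_erase hj)),
      Finset.prod_const, Finset.card_erase_of_mem (Finset.mem_univ i), Finset.card_univ,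
      Fintype.card_fin]
  have h1 : (V \ {a ∈ V | ∀ i, 1 ≤ a i}).ncard
      ≤ (⋃ i ∈ (Finset.univ : Finset (Fin t)), S i).ncard := by
    refine Set.ncard_le_ncard hsub ?_
    exact Set.Finite.biUnion (Finset.finite_toSet _) fun i _ => hSfin i
  refine le_trans h1 (le_trans (ncard_biUnion_le' _ _ hSfin) ?_)
  rw [Finset.sum_congr rfl fun i _ => hScard i]
  simp [Finset.card_univ]

end Counting

section Analysis

theorem hvol_conv {p e t N : ℕ} (hp : 0 < p) :
    (N : ENNReal) * (ENNReal.ofReal (1 / ((p ^ e : ℕ) : ℝ))) ^ t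
      = ENNReal.ofReal ((N : ℝ) / (p : ℝ) ^ (e * t)) := by
  have hq : (0 : ℝ) < ((p ^ e : ℕ) : ℝ) := by positivity
  rw [← ENNReal.ofReal_pow (by positivity), ← ENNReal.ofReal_natCast N,
    ← ENNReal.ofReal_mul (by positivity)]
  congr 1
  rw [div_pow, one_pow]
  push_cast
  rw [← pow_mul]
  ring

theorem tendsto_aux {p C tt : ℕ} (hp : 2 ≤ p) {L : ℝ} (big small : ℕ → ℕ)
    (hle : ∀ e, small e ≤ big e)
    (hdiff : ∀ e, big e - small e ≤ tt * (C * p ^ e) ^ (tt - 1))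
    (hL : Tendsto (fun e => (big e : ℝ) / (p : ℝ) ^ (e * tt)) atTop (nhds L)) :
    Tendsto (fun e => (small e : ℝ) / (p : ℝ) ^ (e * tt)) atTop (nhds L) := by
  have hp0 : (0 : ℝ) < p := by positivity
  set d : ℕ → ℝ := fun e =>
    (big e : ℝ) / (p : ℝ) ^ (e * tt) - (small e : ℝ) / (p : ℝ) ^ (e * tt) with hd
  have hd_eq : ∀ e, d e = ((big e - small e : ℕ) : ℝ) / (p : ℝ) ^ (e * tt) := by
    intro e
    rw [hd, Nat.cast_sub (hle e)]
    ring
  have hd0 : ∀ e, 0 ≤ d e := by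
    intro e
    rw [hd_eq]
    positivity
  have hdbd : ∀ e, d e ≤ ((tt : ℝ) * (C : ℝ) ^ (tt - 1)) * (1 / (p : ℝ)) ^ e := by
    intro e
    rw [hd_eq]
    have hcast : ((big e - small e : ℕ) : ℝ) ≤ (tt : ℝ) * ((C : ℝ) * (p : ℝ) ^ e) ^ (tt - 1) := by
      have := hdiff e
      exact_mod_cast this
    have hx : (0 : ℝ) < (p : ℝ) ^ (e * tt) := by positivity
    calc ((big e - small e : ℕ) : ℝ) / (p : ℝ) ^ (e * tt)
        ≤ ((tt : ℝ) * ((C : ℝ) * (p : ℝ) ^ e) ^ (tt - 1)) / (p : ℝ) ^ (e * tt) := by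
          gcongr
      _ ≤ ((tt : ℝ) * (C : ℝ) ^ (tt - 1)) * (1 / (p : ℝ)) ^ e := by
          match tt with
          | 0 => simp
          | (s + 1) =>
            have he : (p : ℝ) ^ (e * (s + 1)) = (p : ℝ) ^ (e * s) * (p : ℝ) ^ e := by
              rw [← pow_add]; ring_nf
            have hps : (0 : ℝ) < (p : ℝ) ^ (e * s) := by positivity
            have h1 : ((s + 1 : ℕ) : ℝ) * ((C : ℝ) * (p : ℝ) ^ e) ^ ((s + 1) - 1)
                = ((s + 1 : ℕ) : ℝ) * (C : ℝ) ^ s * (p : ℝ) ^ (e * s) := by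
              rw [Nat.add_sub_cancel, mul_pow, ← pow_mul]
              ring_nf
            rw [h1, he, Nat.add_sub_cancel]
            rw [div_pow, one_pow]
            refine le_of_eq ?_
            field_simp
  have hzero : Tendsto d atTop (nhds 0) := by
    refine squeeze_zero hd0 hdbd ?_
    have h1 : (0 : ℝ) ≤ 1 / (p : ℝ) := by positivity
    have h2 : 1 / (p : ℝ) < 1 := by
      rw [div_lt_one hp0]
      exact_mod_cast by omega
    simpa using (tendsto_pow_atTop_nhds_zero_of_lt_one h1 h2).const_mul
      ((tt : ℝ) * (C : ℝ) ^ (tt - 1))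
  have heq : (fun e => (small e : ℝ) / (p : ℝ) ^ (e * tt))
      = fun e => (big e : ℝ) / (p : ℝ) ^ (e * tt) - d e := by
    funext e; rw [hd]; ring
  rw [heq]
  simpa using hL.sub hzero

end Analysis

/-- For `R` F-pure, `B^J(I) = ⋃_e B^J(I; p^e)` is Lebesgue measurable and its volume equals
the F-volume `Vol_F^J(I)`. -/
theorem stmt11 {R : Type u} [CommRing R] [IsNoetherianRing R] (p : ℕ) [Fact p.Prime]
    [CharP R p] (hFP : IsFPure p R) {t : ℕ} (I : Fin t → Ideal R) (J : Ideal R)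
    (hrad : ∀ i, I i ≤ J.radical) (L : ℝ)
    (hL : Tendsto (fun e : ℕ => ((Vnu I (J.frobPow (p ^ e))).ncard : ℝ) / (p : ℝ) ^ (e * t))
      atTop (nhds L)) :
    MeasurableSet (⋃ e : ℕ, Breg I (J.frobPow (p ^ e)) (p ^ e)) ∧
    MeasureTheory.volume (⋃ e : ℕ, Breg I (J.frobPow (p ^ e)) (p ^ e)) =
      ENNReal.ofReal L := by
  classical
  have hp2 : 2 ≤ p := (Fact.out (p := p.Prime)).two_le
  have hp0 : 0 < p := by omega
  obtain ⟨C, hC0, hCbd⟩ := exists_bound J I hrad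
  have hq1 : ∀ e : ℕ, 1 ≤ p ^ e := fun e => Nat.one_le_pow _ _ hp0
  have hVfin : ∀ e : ℕ, (Vnu I (J.frobPow (p ^ e))).Finite := by
    intro e
    refine Set.Finite.subset
      (Set.Finite.pi (fun i : Fin t => Set.finite_Iio (C * p ^ e))) ?_
    intro a ha
    simp only [Set.mem_pi, Set.mem_univ, Set.mem_Iio, forall_true_left]
    exact fun i => hCbd (p ^ e) (hq1 e) a ha i
  have hdc : ∀ (e : ℕ) (a b : Fin t → ℕ), b ∈ Vnu I (J.frobPow (p ^ e)) →
      (∀ i, a i ≤ b i) → a ∈ Vnu I (J.frobPow (p ^ e)) :=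
    fun e a b hb h => Vnu_dclosed hb h
  refine ⟨?_, ?_⟩
  · refine MeasurableSet.iUnion fun e => ?_
    refine MeasurableSet.biUnion (Set.to_countable _) fun a _ => ?_
    exact MeasurableSet.univ_pi fun i => measurableSet_Icc
  · have hmono : Monotone (fun e => Breg I (J.frobPow (p ^ e)) (p ^ e)) := by
      refine monotone_nat_of_le_succ fun e => ?_
      intro x hx
      obtain ⟨a, ha, hxa⟩ := Set.mem_iUnion₂.mp hx
      refine Set.mem_iUnion₂.mpr ⟨fun i => p * a i, Vnu_step hFP J I ha, fun i hi => ?_⟩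
      have h := hxa i hi
      rw [Set.mem_Icc] at h ⊢
      refine ⟨h.1, ?_⟩
      have hcast : (((fun i => p * a i) i : ℕ) : ℝ) / ((p ^ (e + 1) : ℕ) : ℝ)
          = ((a i : ℕ) : ℝ) / ((p ^ e : ℕ) : ℝ) := by
        show ((p * a i : ℕ) : ℝ) / ((p ^ (e + 1) : ℕ) : ℝ) = _
        have hpe : (0 : ℝ) < ((p ^ e : ℕ) : ℝ) := by positivity
        push_cast
        rw [pow_succ]
        field_simp
      rw [hcast]
      exact h.2
    have hlim := MeasureTheory.tendsto_measure_iUnion_atTop (μ := volume) hmono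
    have hvol : ∀ e : ℕ, volume (Breg I (J.frobPow (p ^ e)) (p ^ e))
        = ENNReal.ofReal
            ((({a ∈ Vnu I (J.frobPow (p ^ e)) | ∀ i, 1 ≤ a i}.ncard : ℕ) : ℝ)
              / (p : ℝ) ^ (e * t)) := by
      intro e
      rw [Breg, volume_B (hq1 e) _ (hVfin e) (hdc e), hvol_conv hp0]
    have hreal : Tendsto
        (fun e => (({a ∈ Vnu I (J.frobPow (p ^ e)) | ∀ i, 1 ≤ a i}.ncard : ℕ) : ℝ)
          / (p : ℝ) ^ (e * t)) atTop (nhds L) := by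
      refine tendsto_aux (C := C) hp2
        (fun e => (Vnu I (J.frobPow (p ^ e))).ncard)
        (fun e => {a ∈ Vnu I (J.frobPow (p ^ e)) | ∀ i, 1 ≤ a i}.ncard)
        (fun e => Set.ncard_le_ncard (fun a ha => ha.1) (hVfin e))
        (fun e => ?_) hL
      have hdiffeq :
          (Vnu I (J.frobPow (p ^ e)) \ {a ∈ Vnu I (J.frobPow (p ^ e)) | ∀ i, 1 ≤ a i}).ncard
            = (Vnu I (J.frobPow (p ^ e))).ncard
              - {a ∈ Vnu I (J.frobPow (p ^ e)) | ∀ i, 1 ≤ a i}.ncard :=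
        Set.ncard_diff (fun a ha => ha.1) ((hVfin e).subset (fun a ha => ha.1))
      rw [← hdiffeq]
      exact boundary_count _ (fun a ha i => hCbd (p ^ e) (hq1 e) a ha i)
    have h2 : Tendsto (volume ∘ fun e => Breg I (J.frobPow (p ^ e)) (p ^ e)) atTop
        (nhds (ENNReal.ofReal L)) := by
      have h3 := ENNReal.tendsto_ofReal hreal
      have h4 : (volume ∘ fun e => Breg I (J.frobPow (p ^ e)) (p ^ e))
          = fun e => ENNReal.ofReal
            ((({a ∈ Vnu I (J.frobPow (p ^ e)) | ∀ i, 1 ≤ a i}.ncard : ℕ) : ℝ)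
              / (p : ℝ) ^ (e * t)) := by
        funext e
        exact hvol e
      rw [h4]
      exact h3
    exact tendsto_nhds_unique hlim h2
end
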